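/- Let 𝒜 = {A_1,…,A_K} be n×n matrices over 𝔽 (ℝ or ℂ) and f_𝒜(Q) = (1/2) Σ_k ‖J ∘ (Q^{-1}A_kQ)‖². Fix an invertible Q and set D_k = Q^{-1}A_kQ and G = Σ_{k=1}^K Q^{-*}[D_k^*, J ∘ D_k], where Q^{-*} = (Q^{-1})^*. Then G is the gradient of f_𝒜 at Q with respect to the real Frobenius inner product: for all matrices Z, df_𝒜|_Q(Z) = ⟨G, Z⟩_ℝ. -/

import Mathlib

open Matrix

attribute [local instance] Matrix.frobeniusNormedAddCommGroup Matrix.frobeniusNormedSpace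

variable {𝕜 : Type*} [RCLike 𝕜] {n K : ℕ}

/-- The real Frobenius inner product `⟨X,Y⟩_ℝ = Re ∑ᵢⱼ Xᵢⱼ conj(Yᵢⱼ)`. -/
noncomputable def rinner (X Y : Matrix (Fin n) (Fin n) 𝕜) : ℝ :=
  RCLike.re (∑ i, ∑ j, X i j * (starRingEnd 𝕜) (Y i j))

/-- The off-diagonal part `J ∘ X`. -/
def offd (X : Matrix (Fin n) (Fin n) 𝕜) : Matrix (Fin n) (Fin n) 𝕜 :=
  fun i j => if i = j then 0 else X i j

/-- The cost functional `f_𝒜(Q) = (1/2) ∑ₖ ‖J ∘ (Q⁻¹AₖQ)‖²`. -/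
noncomputable def costF (A : Fin K → Matrix (Fin n) (Fin n) 𝕜)
    (Q : Matrix (Fin n) (Fin n) 𝕜) : ℝ :=
  (1 / 2) * ∑ k, ∑ i, ∑ j, if i ≠ j then ‖(Q⁻¹ * A k * Q) i j‖ ^ 2 else 0

attribute [local instance] Matrix.frobeniusNormedRing Matrix.frobeniusNormedAlgebra

/-- `x ↦ re (conj a * x)` as a continuous ℝ-linear map. -/
noncomputable def reConjCLM (a : 𝕜) : 𝕜 →L[ℝ] ℝ :=
  RCLike.reCLM.comp (((ContinuousLinearMap.mul 𝕜 𝕜) ((starRingEnd 𝕜) a)).restrictScalars ℝ)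

@[simp] lemma reConjCLM_apply (a x : 𝕜) :
    reConjCLM a x = RCLike.re ((starRingEnd 𝕜) a * x) := rfl

lemma hasFDerivAt_normSq' (a : 𝕜) :
    HasFDerivAt (fun x : 𝕜 => ‖x‖ ^ 2) (2 • reConjCLM a) a := by
  have hconj : HasFDerivAt (fun x : 𝕜 => (starRingEnd 𝕜) x)
      ((RCLike.conjCLE (K := 𝕜)).toContinuousLinearMap) a := by
    have h := (RCLike.conjCLE (K := 𝕜)).toContinuousLinearMap.hasFDerivAt (x := a)
    exact h.congr_of_eventuallyEq (Filter.Eventually.of_forall fun x => by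
      simp [RCLike.conjCLE_apply])
  have h2 := hconj.mul' (hasFDerivAt_id a)
  have h3 := (RCLike.reCLM (K := 𝕜)).hasFDerivAt.comp a h2
  have hfun : (fun x : 𝕜 => ‖x‖ ^ 2)
      = fun x : 𝕜 => RCLike.re ((starRingEnd 𝕜) x * x) := by
    funext x
    rw [RCLike.conj_mul]
    norm_cast
  rw [hfun]
  refine (h3.congr_of_eventuallyEq (Filter.Eventually.of_forall fun x => rfl)).congr_fderiv ?_
  ext x
  simp only [ContinuousLinearMap.coe_comp', Function.comp_apply,
    ContinuousLinearMap.add_apply, ContinuousLinearMap.smul_apply,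
    ContinuousLinearMap.coe_id', id_eq, ContinuousLinearMap.smulRight_apply,
    ContinuousLinearEquiv.coe_coe, RCLike.conjCLE_apply, map_add, smul_eq_mul,
    reConjCLM_apply, RCLike.reCLM_apply]
  have hc : (starRingEnd 𝕜) x * a = (starRingEnd 𝕜) ((starRingEnd 𝕜) a * x) := by
    rw [_root_.map_mul, RingHomCompTriple.comp_apply, RingHom.id_apply, mul_comm]
  rw [op_smul_eq_mul, hc, RCLike.conj_re]
  ring

/-- The entry map as a continuous ℝ-linear map. -/
noncomputable def entryCLM (i j : Fin n) : Matrix (Fin n) (Fin n) 𝕜 →L[ℝ] 𝕜 :=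
  LinearMap.toContinuousLinearMap
    { toFun := fun X => X i j
      map_add' := fun _ _ => rfl
      map_smul' := fun _ _ => rfl }

@[simp] lemma entryCLM_apply (i j : Fin n) (X : Matrix (Fin n) (Fin n) 𝕜) :
    entryCLM i j X = X i j := rfl

lemma sum_re_conj_eq_trace (X Y : Matrix (Fin n) (Fin n) 𝕜) :
    ∑ i, ∑ j, RCLike.re ((starRingEnd 𝕜) (Y i j) * X i j)
      = RCLike.re (Matrix.trace (Yᴴ * X)) := by
  have : Matrix.trace (Yᴴ * X) = ∑ i, ∑ j, (starRingEnd 𝕜) (Y j i) * X j i := by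
    simp [Matrix.trace, Matrix.mul_apply, Matrix.conjTranspose_apply, Matrix.diag]
  rw [this, Finset.sum_comm, map_sum]
  exact Finset.sum_congr rfl fun i _ => (map_sum _ _ _).symm

lemma tr_key (D E : Matrix (Fin n) (Fin n) 𝕜) :
    RCLike.re (Matrix.trace (Eᴴ * (Dᴴ * offd D - offd D * Dᴴ)))
      = RCLike.re (Matrix.trace ((offd D)ᴴ * (D * E - E * D))) := by
  have h1 : Matrix.trace (Eᴴ * (Dᴴ * offd D - offd D * Dᴴ))
      = star (Matrix.trace (((offd D)ᴴ * D - D * (offd D)ᴴ) * E)) := by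
    rw [← Matrix.trace_conjTranspose]
    congr 1
    simp [Matrix.conjTranspose_mul, Matrix.conjTranspose_sub]
  rw [h1, RCLike.star_def, RCLike.conj_re]
  congr 1
  rw [sub_mul, Matrix.mul_sub, Matrix.trace_sub, Matrix.trace_sub, Matrix.mul_assoc,
    Matrix.mul_assoc]
  congr 1
  rw [Matrix.trace_mul_comm D ((offd D)ᴴ * E), Matrix.mul_assoc]

/-- with `D_k = Q⁻¹AₖQ`, the matrix `G = ∑ₖ Q⁻*[D_k^*, J ∘ D_k]` is the
gradient of `f_𝒜` at `Q` for the real Frobenius inner product: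
`df_𝒜|_Q(Z) = ⟨G, Z⟩_ℝ` for all `Z`. -/
theorem gradient_costF (A : Fin K → Matrix (Fin n) (Fin n) 𝕜)
    (Q : Matrix (Fin n) (Fin n) 𝕜) (hQ : IsUnit Q)
    (D : Fin K → Matrix (Fin n) (Fin n) 𝕜) (hD : ∀ k, D k = Q⁻¹ * A k * Q)
    (G : Matrix (Fin n) (Fin n) 𝕜)
    (hG : G = ∑ k, (Q⁻¹)ᴴ * ((D k)ᴴ * offd (D k) - offd (D k) * (D k)ᴴ)) :
    ∀ Z : Matrix (Fin n) (Fin n) 𝕜, fderiv ℝ (costF A) Q Z = rinner G Z := by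
  classical
  intro Z
  haveI : CompleteSpace (Matrix (Fin n) (Fin n) 𝕜) := FiniteDimensional.complete ℝ (Matrix (Fin n) (Fin n) 𝕜)
  have hdet : IsUnit Q.det := (Matrix.isUnit_iff_isUnit_det Q).mp hQ
  have hQQ : Q * Q⁻¹ = 1 := Matrix.mul_nonsing_inv Q hdet
  -- derivative of matrix inversion
  have hinv : HasFDerivAt (fun X : (Matrix (Fin n) (Fin n) 𝕜) => X⁻¹)
      (-(ContinuousLinearMap.mulLeftRight ℝ (Matrix (Fin n) (Fin n) 𝕜) Q⁻¹ Q⁻¹)) Q := by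
    have h := hasFDerivAt_ringInverse (𝕜 := ℝ) (R := (Matrix (Fin n) (Fin n) 𝕜)) hQ.unit
    have e1 : (Ring.inverse : (Matrix (Fin n) (Fin n) 𝕜) → (Matrix (Fin n) (Fin n) 𝕜)) = fun X : (Matrix (Fin n) (Fin n) 𝕜) => X⁻¹ := by
      funext X; exact (Matrix.nonsing_inv_eq_ringInverse X).symm
    have e2 : ((hQ.unit⁻¹ : (Matrix (Fin n) (Fin n) 𝕜)ˣ) : (Matrix (Fin n) (Fin n) 𝕜)) = Q⁻¹ := by
      rw [← Ring.inverse_unit hQ.unit, IsUnit.unit_spec,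
        Matrix.nonsing_inv_eq_ringInverse]
    rw [e1, e2] at h
    simpa [IsUnit.unit_spec] using h
  -- derivative of X ↦ X⁻¹ * A k * X
  set Φ : Fin K → ((Matrix (Fin n) (Fin n) 𝕜) →L[ℝ] (Matrix (Fin n) (Fin n) 𝕜)) := fun k =>
    ContinuousLinearMap.mulLeftRight ℝ (Matrix (Fin n) (Fin n) 𝕜) (D k * Q⁻¹) 1
      - ContinuousLinearMap.mulLeftRight ℝ (Matrix (Fin n) (Fin n) 𝕜) Q⁻¹ (D k) with hΦdef
  have hΦapp : ∀ k (W : (Matrix (Fin n) (Fin n) 𝕜)), Φ k W = D k * (Q⁻¹ * W) - (Q⁻¹ * W) * D k := by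
    intro k W
    simp only [hΦdef, ContinuousLinearMap.sub_apply, ContinuousLinearMap.mulLeftRight_apply,
      Matrix.mul_one]
    change D k * Q⁻¹ * W * 1 - Q⁻¹ * W * D k = _
    rw [Matrix.mul_one, Matrix.mul_assoc]
  have hΦ : ∀ k, HasFDerivAt (fun X : (Matrix (Fin n) (Fin n) 𝕜) => X⁻¹ * A k * X) (Φ k) Q := by
    intro k
    have h1 := (hinv.mul' (hasFDerivAt_const (A k) Q)).mul' (hasFDerivAt_id Q)
    simp only [id_eq] at h1
    refine h1.congr_fderiv ?_
    symm
    ext W : 1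
    change Φ k W = Q⁻¹ * A k * W + (Q⁻¹ * 0 + -(Q⁻¹ * W * Q⁻¹) * A k) * Q
    simp only [ContinuousLinearMap.add_apply, ContinuousLinearMap.smul_apply,
      ContinuousLinearMap.coe_id', id_eq, ContinuousLinearMap.smulRight_apply,
      ContinuousLinearMap.neg_apply, ContinuousLinearMap.mulLeftRight_apply,
      ContinuousLinearMap.zero_apply, smul_zero, zero_add, smul_eq_mul, hΦapp]
    rw [hD k]
    have : Q⁻¹ * A k * Q * (Q⁻¹ * W) = Q⁻¹ * A k * W := by
      rw [show Q⁻¹ * A k * Q * (Q⁻¹ * W) = Q⁻¹ * A k * (Q * Q⁻¹) * W by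
        simp only [Matrix.mul_assoc], hQQ, Matrix.mul_one]
    rw [this]
    simp [sub_eq_add_neg, Matrix.mul_assoc]
  -- derivative of each summand
  set ψ : Fin K → Fin n → Fin n → ((Matrix (Fin n) (Fin n) 𝕜) →L[ℝ] ℝ) := fun k i j =>
    if i = j then 0
    else (2 • ((reConjCLM ((Q⁻¹ * A k * Q) i j)).comp ((entryCLM i j).comp (Φ k)))) with hψdef
  have hterm : ∀ k i j, HasFDerivAt
      (fun X : (Matrix (Fin n) (Fin n) 𝕜) => if i ≠ j then ‖(X⁻¹ * A k * X) i j‖ ^ 2 else 0) (ψ k i j) Q := by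
    intro k i j
    by_cases hij : i = j
    · simpa [hψdef, hij] using hasFDerivAt_const (0 : ℝ) Q
    · have he := (entryCLM i j).hasFDerivAt.comp Q (hΦ k)
      have h2 := (hasFDerivAt_normSq' ((Q⁻¹ * A k * Q) i j)).comp Q he
      simp only [hψdef, hij, ne_eq, not_false_eq_true, if_true, if_false]
      rw [ContinuousLinearMap.smul_comp] at h2
      exact h2
  have hF : HasFDerivAt (costF A)
      ((1 / 2 : ℝ) • ∑ k, ∑ i, ∑ j, ψ k i j) Q := by
    have hsum : HasFDerivAt
        (fun X : (Matrix (Fin n) (Fin n) 𝕜) => ∑ k, ∑ i, ∑ j, if i ≠ j then ‖(X⁻¹ * A k * X) i j‖ ^ 2 else 0)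
        (∑ k, ∑ i, ∑ j, ψ k i j) Q :=
      HasFDerivAt.fun_sum fun k _ => HasFDerivAt.fun_sum fun i _ => HasFDerivAt.fun_sum fun j _ =>
        hterm k i j
    exact hsum.const_mul (1 / 2 : ℝ)
  rw [hF.fderiv]
  -- now compute the value of the derivative at Z
  set E := Q⁻¹ * Z with hE
  have happ : ∀ k i j, (ψ k i j) Z =
      if i = j then 0
      else 2 * RCLike.re ((starRingEnd 𝕜) (D k i j) * ((D k * E - E * D k) i j)) := by
    intro k i j
    by_cases hij : i = j
    · simp [hψdef, hij]
    · simp only [hψdef, if_neg hij, ContinuousLinearMap.smul_apply,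
        ContinuousLinearMap.comp_apply, entryCLM_apply, smul_eq_mul]
      rw [hΦapp, ← hD k, ← hE]
      norm_num
      ring
  have key : ∀ k, (∑ i, ∑ j, (ψ k i j) Z)
      = 2 * RCLike.re (Matrix.trace (Zᴴ * ((Q⁻¹)ᴴ * ((D k)ᴴ * offd (D k) - offd (D k) * (D k)ᴴ)))) := by
    intro k
    have h1 : (∑ i, ∑ j, (ψ k i j) Z)
        = 2 * ∑ i, ∑ j, RCLike.re
            ((starRingEnd 𝕜) (offd (D k) i j) * ((D k * E - E * D k) i j)) := by
      rw [Finset.mul_sum]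
      refine Finset.sum_congr rfl fun i _ => ?_
      rw [Finset.mul_sum]
      refine Finset.sum_congr rfl fun j _ => ?_
      rw [happ, offd]
      by_cases hij : i = j <;> simp [hij]
    rw [h1, sum_re_conj_eq_trace, ← tr_key]
    congr 2
    rw [← Matrix.mul_assoc, ← Matrix.conjTranspose_mul, ← hE]
  have hGtrace : rinner G Z = RCLike.re (Matrix.trace (Zᴴ * G)) := by
    rw [rinner, ← sum_re_conj_eq_trace]
    simp only [map_sum]
    exact Finset.sum_congr rfl fun i _ => Finset.sum_congr rfl fun j _ =>
      congrArg _ (mul_comm _ _)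
  rw [hGtrace, hG, Matrix.mul_sum, Matrix.trace_sum, map_sum]
  simp only [ContinuousLinearMap.smul_apply, ContinuousLinearMap.coe_sum', Finset.sum_apply,
    smul_eq_mul]
  rw [Finset.mul_sum]
  refine Finset.sum_congr rfl fun k _ => ?_
  rw [key k]
  ring
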